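/- Let δ_1, …, δ_p > 0, not all equal, and φ the standard normal density. Define f(λ) = ∑_j δ_j² Φ(δ_j − λ) and g(λ) = ∑_j Φ(δ_j − λ), where Φ is the standard normal CDF. Then the derivative ratio f′(λ)/g′(λ) = (∑_j δ_j² φ(λ − δ_j)) / (∑_j φ(λ − δ_j)) is strictly increasing in λ on ℝ. -/

import Mathlib

open Real

theorem double_sum_sym_aux {ι : Type*} [Fintype ι] (a u v : ι → ℝ) :
    ∑ i : ι, ∑ j : ι, (a i - a j) * (u i * v j - v i * u j)
      = 2 * ((∑ i, a i * u i) * (∑ i, v i) - (∑ i, a i * v i) * (∑ i, u i)) := by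
  have h1 : (∑ i, a i * u i) * (∑ i, v i) = ∑ i : ι, ∑ j : ι, a i * u i * v j :=
    Finset.sum_mul_sum _ _ _ _
  have h2 : (∑ i, a i * v i) * (∑ i, u i) = ∑ i : ι, ∑ j : ι, a i * v i * u j :=
    Finset.sum_mul_sum _ _ _ _
  have h3 : ∑ i : ι, ∑ j : ι, a j * u i * v j = ∑ i : ι, ∑ j : ι, a i * v i * u j := by
    rw [Finset.sum_comm]
    exact Finset.sum_congr rfl fun i _ => Finset.sum_congr rfl fun j _ => by ring
  have h4 : ∑ i : ι, ∑ j : ι, a j * v i * u j = ∑ i : ι, ∑ j : ι, a i * u i * v j := by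
    rw [Finset.sum_comm]
    exact Finset.sum_congr rfl fun i _ => Finset.sum_congr rfl fun j _ => by ring
  have expand : ∑ i : ι, ∑ j : ι, (a i - a j) * (u i * v j - v i * u j)
      = (∑ i : ι, ∑ j : ι, a i * u i * v j) - (∑ i : ι, ∑ j : ι, a i * v i * u j)
        - (∑ i : ι, ∑ j : ι, a j * u i * v j) + (∑ i : ι, ∑ j : ι, a j * v i * u j) := by
    simp only [← Finset.sum_sub_distrib, ← Finset.sum_add_distrib]
    refine Finset.sum_congr rfl fun i _ => Finset.sum_congr rfl fun j _ => by ring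
  rw [expand, h3, h4]
  linarith [h1, h2]

theorem stmt_14 (p : ℕ) (δ : Fin p → ℝ) (hpos : ∀ j, 0 < δ j)
    (hne : ∃ i j, δ i ≠ δ j) :
    StrictMono (fun l : ℝ =>
      (∑ j, δ j ^ 2 * ((Real.sqrt (2 * Real.pi))⁻¹ * Real.exp (-(l - δ j) ^ 2 / 2))) /
        (∑ j, (Real.sqrt (2 * Real.pi))⁻¹ * Real.exp (-(l - δ j) ^ 2 / 2))) := by
  obtain ⟨i0, j0, hij⟩ := hne
  set s : ℝ := (Real.sqrt (2 * Real.pi))⁻¹ with hs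
  have hsp : 0 < s := by
    rw [hs]
    exact inv_pos.mpr (Real.sqrt_pos.mpr (by positivity))
  set c : Fin p → ℝ → ℝ := fun k l => s * Real.exp (-(l - δ k) ^ 2 / 2) with hc
  have hcp : ∀ k l, 0 < c k l := fun k l => mul_pos hsp (Real.exp_pos _)
  have hD : ∀ l : ℝ, 0 < ∑ j, c j l := fun l =>
    Finset.sum_pos (fun j _ => hcp j l) ⟨i0, Finset.mem_univ i0⟩
  intro l1 l2 hl
  have hexp : ∀ i j : Fin p, c i l2 * c j l1 - c i l1 * c j l2 =
      s ^ 2 * (Real.exp (-(l2 - δ i) ^ 2 / 2 + -(l1 - δ j) ^ 2 / 2) -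
        Real.exp (-(l1 - δ i) ^ 2 / 2 + -(l2 - δ j) ^ 2 / 2)) := by
    intro i j
    simp only [hc, Real.exp_add]; ring
  have term_nonneg : ∀ i j : Fin p,
      0 ≤ (δ i ^ 2 - δ j ^ 2) * (c i l2 * c j l1 - c i l1 * c j l2) := by
    intro i j
    rcases lt_trichotomy (δ i) (δ j) with h | h | h
    · have h1 : δ i ^ 2 < δ j ^ 2 := by nlinarith [hpos i, hpos j]
      have h2 : (-(l2 - δ i) ^ 2 / 2 + -(l1 - δ j) ^ 2 / 2) <
          (-(l1 - δ i) ^ 2 / 2 + -(l2 - δ j) ^ 2 / 2) := by nlinarith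
      have h3 := Real.exp_lt_exp.mpr h2
      have h4 : c i l2 * c j l1 - c i l1 * c j l2 < 0 := by
        rw [hexp i j]
        exact mul_neg_of_pos_of_neg (by positivity) (by linarith)
      exact le_of_lt (mul_pos_of_neg_of_neg (by linarith) h4)
    · simp [h]
    · have h1 : δ j ^ 2 < δ i ^ 2 := by nlinarith [hpos i, hpos j]
      have h2 : (-(l1 - δ i) ^ 2 / 2 + -(l2 - δ j) ^ 2 / 2) <
          (-(l2 - δ i) ^ 2 / 2 + -(l1 - δ j) ^ 2 / 2) := by nlinarith
      have h3 := Real.exp_lt_exp.mpr h2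
      have h4 : 0 < c i l2 * c j l1 - c i l1 * c j l2 := by
        rw [hexp i j]
        exact mul_pos (by positivity) (by linarith)
      exact le_of_lt (mul_pos (by linarith) h4)
  have term_pos : 0 < (δ i0 ^ 2 - δ j0 ^ 2) * (c i0 l2 * c j0 l1 - c i0 l1 * c j0 l2) := by
    rcases lt_trichotomy (δ i0) (δ j0) with h | h | h
    · have h1 : δ i0 ^ 2 < δ j0 ^ 2 := by nlinarith [hpos i0, hpos j0]
      have h2 : (-(l2 - δ i0) ^ 2 / 2 + -(l1 - δ j0) ^ 2 / 2) <
          (-(l1 - δ i0) ^ 2 / 2 + -(l2 - δ j0) ^ 2 / 2) := by nlinarith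
      have h3 := Real.exp_lt_exp.mpr h2
      have h4 : c i0 l2 * c j0 l1 - c i0 l1 * c j0 l2 < 0 := by
        rw [hexp i0 j0]
        exact mul_neg_of_pos_of_neg (by positivity) (by linarith)
      exact mul_pos_of_neg_of_neg (by linarith) h4
    · exact absurd h hij
    · have h1 : δ j0 ^ 2 < δ i0 ^ 2 := by nlinarith [hpos i0, hpos j0]
      have h2 : (-(l1 - δ i0) ^ 2 / 2 + -(l2 - δ j0) ^ 2 / 2) <
          (-(l2 - δ i0) ^ 2 / 2 + -(l1 - δ j0) ^ 2 / 2) := by nlinarith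
      have h3 := Real.exp_lt_exp.mpr h2
      have h4 : 0 < c i0 l2 * c j0 l1 - c i0 l1 * c j0 l2 := by
        rw [hexp i0 j0]
        exact mul_pos (by positivity) (by linarith)
      exact mul_pos (by linarith) h4
  have hSpos : 0 < ∑ i : Fin p, ∑ j : Fin p,
      (δ i ^ 2 - δ j ^ 2) * (c i l2 * c j l1 - c i l1 * c j l2) := by
    apply Finset.sum_pos' (fun i _ => Finset.sum_nonneg fun j _ => term_nonneg i j)
    exact ⟨i0, Finset.mem_univ _, Finset.sum_pos' (fun j _ => term_nonneg i0 j)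
      ⟨j0, Finset.mem_univ _, term_pos⟩⟩
  have key := double_sum_sym_aux (fun k => δ k ^ 2) (fun k => c k l2) (fun k => c k l1)
  rw [key] at hSpos
  show (∑ j, δ j ^ 2 * c j l1) / (∑ j, c j l1) < (∑ j, δ j ^ 2 * c j l2) / (∑ j, c j l2)
  rw [div_lt_div_iff₀ (hD l1) (hD l2)]
  linarith
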